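/- Fix an integer N ≥ 2, a real p with 0 < p < 1, q = 1 − p, and a strategy S. If L : {0,…,N} → ℝ satisfies L(0) = 0, L(N) = 1, and L(i) = q·L(i − S(i)) + p·L(i + S(i)) for all 1 ≤ i ≤ N − 1, then 0 ≤ L(i) ≤ 1 for every 0 ≤ i ≤ N. -/

import Mathlib

/-- Minimum principle: a solution of the recurrence with nonnegative boundary
values is nonnegative. -/
lemma win_prob_aux
    (N : ℕ) (p q : ℝ)
    (hp0 : 0 < p) (hp1 : p < 1) (hq : q = 1 - p)
    (S : ℕ → ℕ)
    (hS : ∀ i : ℕ, 1 ≤ i → i ≤ N - 1 → 1 ≤ S i ∧ S i ≤ min i (N - i))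
    (L : ℕ → ℝ) (h0 : 0 ≤ L 0) (hNval : 0 ≤ L N)
    (hrec : ∀ i : ℕ, 1 ≤ i → i ≤ N - 1 →
      L i = q * L (i - S i) + p * L (i + S i)) :
    ∀ i : ℕ, i ≤ N → 0 ≤ L i := by
  have hq0 : 0 < q := by rw [hq]; linarith
  -- existence of an index attaining the minimum
  have hex : ∃ k : ℕ, k ≤ N ∧ ∀ j ≤ N, L k ≤ L j := by
    obtain ⟨k, hk, hmin⟩ := Finset.exists_min_image (Finset.range (N + 1)) L
      ⟨0, by simp⟩
    refine ⟨k, by simpa [Nat.lt_succ_iff] using hk, fun j hj => hmin j ?_⟩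
    simpa [Nat.lt_succ_iff] using hj
  classical
  set i0 := Nat.find hex with hi0def
  obtain ⟨hi0N, hi0min⟩ := Nat.find_spec hex
  have key : 0 ≤ L i0 := by
    rcases eq_or_ne i0 0 with h | h
    · rw [h]; exact h0
    rcases eq_or_ne i0 N with h' | h'
    · rw [h']; exact hNval
    · -- interior case: contradiction with minimality of i0
      exfalso
      have h1 : 1 ≤ i0 := Nat.one_le_iff_ne_zero.mpr h
      have h2 : i0 ≤ N - 1 := by omega
      obtain ⟨hs1, hs2⟩ := hS i0 h1 h2
      have hsle : S i0 ≤ i0 := le_trans hs2 (min_le_left _ _)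
      have hsle' : S i0 ≤ N - i0 := le_trans hs2 (min_le_right _ _)
      have hleN1 : i0 - S i0 ≤ N := by omega
      have hleN2 : i0 + S i0 ≤ N := by omega
      have ha : L i0 ≤ L (i0 - S i0) := hi0min _ hleN1
      have hb : L i0 ≤ L (i0 + S i0) := hi0min _ hleN2
      have hr := hrec i0 h1 h2
      have haeq : L (i0 - S i0) = L i0 := by
        by_contra hne
        have hlt' : L i0 < L (i0 - S i0) := lt_of_le_of_ne ha (Ne.symm hne)
        have h1' : q * L i0 < q * L (i0 - S i0) := mul_lt_mul_of_pos_left hlt' hq0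
        have h2' : p * L i0 ≤ p * L (i0 + S i0) := mul_le_mul_of_nonneg_left hb hp0.le
        have hsum : q * L i0 + p * L i0 = L i0 := by rw [hq]; ring
        linarith
      have hlt : i0 - S i0 < i0 := by omega
      exact Nat.find_min hex hlt ⟨hleN1, fun j hj => haeq ▸ hi0min j hj⟩
  intro i hi
  exact le_trans key (hi0min i hi)

/-- Any solution of the win-probability system for a stationary strategy `S`
takes values in `[0,1]`. -/
theorem win_prob_system_between_zero_and_one
    (N : ℕ) (hN : 2 ≤ N) (p q : ℝ)
    (hp0 : 0 < p) (hp1 : p < 1) (hq : q = 1 - p)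
    (S : ℕ → ℕ)
    (hS : ∀ i : ℕ, 1 ≤ i → i ≤ N - 1 → 1 ≤ S i ∧ S i ≤ min i (N - i))
    (L : ℕ → ℝ) (h0 : L 0 = 0) (hNval : L N = 1)
    (hrec : ∀ i : ℕ, 1 ≤ i → i ≤ N - 1 →
      L i = q * L (i - S i) + p * L (i + S i)) :
    ∀ i : ℕ, i ≤ N → 0 ≤ L i ∧ L i ≤ 1 := by
  intro i hi
  constructor
  · exact win_prob_aux N p q hp0 hp1 hq S hS L (by rw [h0]) (by rw [hNval]; norm_num)
      hrec i hi
  · have := win_prob_aux N p q hp0 hp1 hq S hS (fun j => 1 - L j)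
      (by simp [h0]) (by simp [hNval])
      (fun j hj1 hj2 => by
        have := hrec j hj1 hj2
        show 1 - L j = q * (1 - L (j - S j)) + p * (1 - L (j + S j))
        rw [this, hq]; ring) i hi
    simpa using this
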